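/- Generalized Cauchy–Binet identity specialization: for a positive semidefinite A = L L* ∈ M_n(ℂ) with L lower triangular, a finite subgroup G ≤ S_n and an irreducible character χ of G, the normalized generalized matrix function satisfies (1/χ(e)) d^G_χ(A) = (1/|G|) Σ_{γ ∈ Ω} |d^G_χ(L[id|γ])|², where Ω = {γ ∈ {1,…,n}^n : Σ_{g ∈ G_γ} χ(g) ≠ 0}, G_γ = {g ∈ G : γ∘g = γ}, and L[id|γ]_{ij} = L_{i,γ(j)}. In particular (1/χ(e)) d^G_χ(A) ≥ 0. -/

import Mathlib

open CategoryTheory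
open scoped Classical ComplexOrder

noncomputable section

/-- A "scaled idempotent" has trace `c * N` for a natural `N`, and is zero if its trace is. -/
lemma projlike_trace {V : Type} [AddCommGroup V] [Module ℂ V] [FiniteDimensional ℂ V]
    (T : V →ₗ[ℂ] V) (c : ℂ) (hc : c ≠ 0) (h : T ∘ₗ T = c • T) :
    (∃ N : ℕ, LinearMap.trace ℂ V T = c * N) ∧ (LinearMap.trace ℂ V T = 0 → T = 0) := by
  set P : V →ₗ[ℂ] V := c⁻¹ • T with hP
  have hTP : T = c • P := by
    rw [hP, smul_smul, mul_inv_cancel₀ hc, one_smul]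
  have hPP : P ∘ₗ P = P := by
    rw [hP]
    rw [LinearMap.smul_comp, LinearMap.comp_smul, h, smul_smul, smul_smul]
    rw [show c⁻¹ * c⁻¹ * c = c⁻¹ by field_simp]
  have hproj : LinearMap.IsProj (LinearMap.range P) P := by
    refine ⟨fun x => LinearMap.mem_range_self P x, ?_⟩
    rintro x ⟨y, rfl⟩
    exact DFunLike.congr_fun hPP y
  have htr : LinearMap.trace ℂ V P = (Module.finrank ℂ (LinearMap.range P) : ℂ) := hproj.trace
  constructor
  · refine ⟨Module.finrank ℂ (LinearMap.range P), ?_⟩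
    rw [hTP, map_smul, smul_eq_mul, htr]
  · intro h0
    rw [hTP, map_smul, smul_eq_mul, htr] at h0
    have : (Module.finrank ℂ (LinearMap.range P) : ℂ) = 0 := by
      rcases mul_eq_zero.mp h0 with h' | h'
      · exact absurd h' hc
      · exact h'
    have hfr : Module.finrank ℂ (LinearMap.range P) = 0 := by exact_mod_cast this
    have : LinearMap.range P = ⊥ := Submodule.finrank_eq_zero.mp hfr
    have hP0 : P = 0 := LinearMap.range_eq_bot.mp this
    rw [hTP, hP0, smul_zero]

/-- For an element of finite order, the character at the inverse is the conjugate. -/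
lemma char_inv_eq_conj {Γ : Type} [Group Γ] (V : FDRep ℂ Γ) (g : Γ)
    (hg : IsOfFinOrder g) :
    V.character g⁻¹ = (starRingEnd ℂ) (V.character g) := by
  set k := orderOf g with hk
  have hkpos : 0 < k := hg.orderOf_pos
  have hkne : (k : ℂ) ≠ 0 := Nat.cast_ne_zero.mpr hkpos.ne'
  set t : ℕ → ℂ := fun j => V.character (g ^ j) with ht
  obtain ⟨ζ, hζ⟩ : ∃ ζ : ℂ, IsPrimitiveRoot ζ k :=
    ⟨_, Complex.isPrimitiveRoot_exp k hkpos.ne'⟩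
  have hζk : ζ ^ k = 1 := hζ.pow_eq_one
  have hnorm : ∀ a : ℕ, ‖ζ ^ a‖ = 1 := by
    intro a
    have : (ζ ^ a) ^ k = 1 := by rw [← pow_mul, mul_comm, pow_mul, hζk, one_pow]
    exact Complex.norm_eq_one_of_pow_eq_one this hkpos.ne'
  have hconj : ∀ a : ℕ, ζ ^ ((k - 1) * a) = (starRingEnd ℂ) (ζ ^ a) := by
    intro a
    have h1 : ζ ^ ((k - 1) * a) = (ζ ^ a) ^ (k - 1) := by
      rw [← pow_mul, mul_comm]
    have h2 : (ζ ^ a) ^ (k - 1) * (ζ ^ a) = 1 := by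
      rw [← pow_succ, Nat.sub_add_cancel hkpos, ← pow_mul, mul_comm a k, pow_mul, hζk, one_pow]
    have h3 : (ζ ^ a) ^ (k - 1) = (ζ ^ a)⁻¹ := eq_inv_of_mul_eq_one_left h2
    rw [h1, h3, Complex.inv_eq_conj (hnorm a)]
  have hgeom : ∀ l : ℕ, (∑ a ∈ Finset.range k, (ζ ^ l) ^ a)
      = if k ∣ l then (k : ℂ) else 0 := by
    intro l
    by_cases hdvd : k ∣ l
    · rw [if_pos hdvd, (hζ.pow_eq_one_iff_dvd l).mpr hdvd]
      simp
    · rw [if_neg hdvd]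
      have hne1 : ζ ^ l ≠ 1 := fun h => hdvd ((hζ.pow_eq_one_iff_dvd l).mp h)
      rw [geom_sum_eq hne1]
      have : (ζ ^ l) ^ k = 1 := by rw [← pow_mul, mul_comm, pow_mul, hζk, one_pow]
      rw [this, sub_self, zero_div]
  have hT : ∀ a : ℕ, ∃ N : ℕ,
      (∑ j ∈ Finset.range k, (ζ ^ a) ^ j * t j) = (k : ℂ) * N := by
    intro a
    set f : Module.End ℂ V := V.ρ g with hf
    have hfk : f ^ k = 1 := by
      rw [hf, ← map_pow, hk, pow_orderOf_eq_one, map_one]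
    set x : Module.End ℂ V := (ζ ^ a) • f with hx
    have hxk : x ^ k = 1 := by
      rw [hx, smul_pow, hfk, ← pow_mul, mul_comm, pow_mul, hζk, one_pow, one_smul]
    set T : Module.End ℂ V := ∑ j ∈ Finset.range k, x ^ j with hTdef
    have hxT : x * T = T := by
      rw [hTdef, Finset.mul_sum]
      have h1 : ∑ j ∈ Finset.range k, x * x ^ j = ∑ j ∈ Finset.range k, x ^ (j + 1) := by
        refine Finset.sum_congr rfl fun j _ => ?_
        exact (pow_succ' x j).symm
      rw [h1]
      have h2 : ∑ j ∈ Finset.range (k + 1), x ^ j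
          = (∑ j ∈ Finset.range k, x ^ (j + 1)) + x ^ 0 := Finset.sum_range_succ' _ _
      have h3 : ∑ j ∈ Finset.range (k + 1), x ^ j
          = (∑ j ∈ Finset.range k, x ^ j) + x ^ k := Finset.sum_range_succ _ _
      have h4 : (∑ j ∈ Finset.range k, x ^ (j + 1)) + x ^ 0
          = (∑ j ∈ Finset.range k, x ^ j) + x ^ k := h2.symm.trans h3
      rw [hxk, pow_zero] at h4
      exact add_right_cancel h4
    have hxjT : ∀ j : ℕ, x ^ j * T = T := by
      intro j
      induction j with
      | zero => rw [pow_zero, one_mul]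
      | succ j ih => rw [pow_succ', mul_assoc, ih, hxT]
    have hTT : T ∘ₗ T = (k : ℂ) • T := by
      have h5 : T * T = ∑ j ∈ Finset.range k, x ^ j * T := by
        rw [hTdef, Finset.sum_mul]
      have h6 : T * T = (k : ℕ) • T := by
        rw [h5, Finset.sum_congr rfl (fun j _ => hxjT j), Finset.sum_const,
          Finset.card_range]
      rw [← Module.End.mul_eq_comp, h6, Nat.cast_smul_eq_nsmul]
    obtain ⟨N, hN⟩ := (projlike_trace T (k : ℂ) hkne hTT).1
    refine ⟨N, ?_⟩
    rw [← hN, hTdef, map_sum]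
    refine Finset.sum_congr rfl fun j _ => ?_
    rw [hx, smul_pow, map_smul, smul_eq_mul]
    congr 1
    rw [hf, ← map_pow]
    rfl
  set N : ℕ → ℕ := fun a => (hT a).choose with hNdef
  have hNspec : ∀ a : ℕ, (∑ j ∈ Finset.range k, (ζ ^ a) ^ j * t j) = (k : ℂ) * N a :=
    fun a => (hT a).choose_spec
  have hE : ∀ e : ℕ,
      (∑ a ∈ Finset.range k, ζ ^ (e * a) * ((k : ℂ) * N a))
        = ∑ j ∈ Finset.range k, (if k ∣ e + j then (k : ℂ) * t j else 0) := by
    intro e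
    have step1 : ∀ a, ζ ^ (e * a) * ((k : ℂ) * N a)
        = ∑ j ∈ Finset.range k, (ζ ^ (e + j)) ^ a * t j := by
      intro a
      rw [← hNspec a, Finset.mul_sum]
      refine Finset.sum_congr rfl fun j _ => ?_
      rw [← mul_assoc]
      congr 1
      rw [← pow_mul, ← pow_mul, ← pow_add]
      congr 1
      ring
    rw [Finset.sum_congr rfl fun a _ => step1 a, Finset.sum_comm]
    refine Finset.sum_congr rfl fun j _ => ?_
    rw [← Finset.sum_mul, hgeom (e + j)]
    split
    · rfl
    · rw [zero_mul]
  -- evaluation at e = 1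
  have hE1 : (∑ a ∈ Finset.range k, ζ ^ a * ((k : ℂ) * N a)) = (k : ℂ) * t (k - 1) := by
    have := hE 1
    rw [Finset.sum_congr rfl (fun a _ => by rw [one_mul])] at this
    rw [this]
    rw [Finset.sum_eq_single_of_mem (k - 1)
      (Finset.mem_range.mpr (Nat.sub_lt hkpos one_pos))]
    · rw [if_pos (show k ∣ 1 + (k - 1) by
        rw [show 1 + (k - 1) = k from by omega])]
    · intro j hj hjne
      rw [if_neg]
      intro hdvd
      have hjk : j < k := Finset.mem_range.mp hj
      have h1 : 1 + j ≤ k := by omega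
      have h2 : k ≤ 1 + j := Nat.le_of_dvd (by omega) hdvd
      exact hjne (by omega)
  -- evaluation at e = k - 1
  have hE2 : (∑ a ∈ Finset.range k, ζ ^ ((k - 1) * a) * ((k : ℂ) * N a))
      = (k : ℂ) * t 1 := by
    rw [hE (k - 1)]
    by_cases hk1 : k = 1
    · have hg1 : g = 1 := orderOf_eq_one_iff.mp (hk.symm.trans hk1)
      have ht01 : t 0 = t 1 := by simp [ht, hg1]
      rw [hk1, Finset.sum_range_one, if_pos (show (1:ℕ) ∣ 1 - 1 + 0 by omega), ht01]
    · have hk2 : 2 ≤ k := by omega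
      rw [Finset.sum_eq_single_of_mem 1 (Finset.mem_range.mpr (by omega))]
      · rw [if_pos (show k ∣ k - 1 + 1 by
          rw [Nat.sub_add_cancel hkpos])]
      · intro j hj hjne
        rw [if_neg]
        intro hdvd
        have hjk : j < k := Finset.mem_range.mp hj
        obtain ⟨c, hc⟩ := hdvd
        rcases (by omega : c = 0 ∨ c = 1 ∨ 2 ≤ c) with h | h | h
        · subst h; omega
        · subst h; omega
        · have h2k : k * 2 ≤ k * c := Nat.mul_le_mul_left k h
          omega
  -- cancel k
  have hsum1 : (∑ a ∈ Finset.range k, ζ ^ a * (N a : ℂ)) = t (k - 1) := by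
    have := hE1
    rw [show (∑ a ∈ Finset.range k, ζ ^ a * ((k : ℂ) * N a))
        = (k : ℂ) * ∑ a ∈ Finset.range k, ζ ^ a * (N a : ℂ) by
      rw [Finset.mul_sum]; exact Finset.sum_congr rfl fun a _ => by ring] at this
    exact mul_left_cancel₀ hkne this
  have hsum2 : (∑ a ∈ Finset.range k, (starRingEnd ℂ) (ζ ^ a) * (N a : ℂ)) = t 1 := by
    have := hE2
    rw [show (∑ a ∈ Finset.range k, ζ ^ ((k - 1) * a) * ((k : ℂ) * N a))
        = (k : ℂ) * ∑ a ∈ Finset.range k, ζ ^ ((k - 1) * a) * (N a : ℂ) by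
      rw [Finset.mul_sum]; exact Finset.sum_congr rfl fun a _ => by ring] at this
    have h' := mul_left_cancel₀ hkne this
    rw [← h']
    exact Finset.sum_congr rfl fun a _ => by rw [hconj a]
  -- conclude
  have hchar_inv : V.character g⁻¹ = t (k - 1) := by
    have hginv : g ^ (k - 1) = g⁻¹ := by
      refine eq_inv_of_mul_eq_one_left ?_
      rw [← pow_succ, Nat.sub_add_cancel hkpos, hk, pow_orderOf_eq_one]
    rw [ht]
    simp only []
    rw [hginv]
  have hchar : V.character g = t 1 := by rw [ht]; simp
  rw [hchar_inv, hchar, ← hsum1, ← hsum2, map_sum]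
  refine Finset.sum_congr rfl fun a _ => ?_
  rw [map_mul, Complex.conj_conj, map_natCast]

lemma conv_char {Γ : Type} [Group Γ] [Fintype Γ] (V : FDRep ℂ Γ) [Simple V] :
    V.character 1 ≠ 0 ∧
    ∀ u : Γ, (∑ τ : Γ, (starRingEnd ℂ) (V.character τ) * V.character (τ * u))
      = ((Fintype.card Γ : ℂ) / V.character 1) * V.character u := by
  have hcard : (Fintype.card Γ : ℂ) ≠ 0 :=
    Nat.cast_ne_zero.mpr Fintype.card_ne_zero
  letI : Invertible ((Nat.card Γ) : ℂ) :=
    invertibleOfNonzero (by rwa [Nat.card_eq_fintype_card])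
  have horth := FDRep.char_orthonormal (k := ℂ) (G := Γ) V V
  rw [if_pos ⟨Iso.refl V⟩, Nat.card_eq_fintype_card, inv_mul_eq_iff_eq_mul₀ hcard] at horth
  have hsum : (∑ g : Γ, V.character g * V.character g⁻¹) = (Fintype.card Γ : ℂ) := by
    rw [mul_one] at horth
    exact horth
  have hchi1 : V.character 1 ≠ 0 := by
    intro h0
    have hfr : Module.finrank ℂ V = 0 := by
      have := FDRep.char_one V
      rw [h0] at this
      exact_mod_cast this.symm
    have hsub : Subsingleton V := Module.finrank_zero_iff.mp hfr
    have hzero : ∀ τ : Γ, V.character τ = 0 := by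
      intro τ
      have : V.ρ τ = 0 := Subsingleton.elim _ _
      show LinearMap.trace ℂ V (V.ρ τ) = 0
      rw [this, map_zero]
    rw [Finset.sum_congr rfl (fun τ _ => by rw [hzero τ, zero_mul])] at hsum
    rw [Finset.sum_const, smul_zero] at hsum
    exact hcard hsum.symm
  refine ⟨hchi1, ?_⟩
  set z : V →ₗ[ℂ] V := ∑ τ : Γ, (starRingEnd ℂ) (V.character τ) • (V.ρ τ : V →ₗ[ℂ] V)
    with hzdef
  have hcomm : ∀ s : Γ, (V.ρ s : V →ₗ[ℂ] V) * z = z * (V.ρ s : V →ₗ[ℂ] V) := by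
    intro s
    rw [hzdef, Finset.mul_sum, Finset.sum_mul]
    have hL : ∀ τ : Γ, (V.ρ s : V →ₗ[ℂ] V) * ((starRingEnd ℂ) (V.character τ) • V.ρ τ)
        = (starRingEnd ℂ) (V.character τ) • (V.ρ (s * τ) : V →ₗ[ℂ] V) := by
      intro τ
      rw [mul_smul_comm, map_mul]
    have hR : ∀ τ : Γ, ((starRingEnd ℂ) (V.character τ) • (V.ρ τ : V →ₗ[ℂ] V)) * V.ρ s
        = (starRingEnd ℂ) (V.character τ) • (V.ρ (τ * s) : V →ₗ[ℂ] V) := by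
      intro τ
      rw [smul_mul_assoc, map_mul]
    rw [Finset.sum_congr rfl fun τ _ => hL τ, Finset.sum_congr rfl fun τ _ => hR τ]
    refine Fintype.sum_equiv ((Equiv.mulLeft s).trans (Equiv.mulRight s⁻¹)) _ _ ?_
    intro τ
    simp only [Equiv.trans_apply, Equiv.coe_mulLeft, Equiv.coe_mulRight]
    rw [FDRep.char_conj V τ s]
    congr 2
    group
  set φ : V ⟶ V := ⟨InducedCategory.homMk (ModuleCat.ofHom z), fun s => by
    apply InducedCategory.hom_ext
    apply ModuleCat.hom_ext
    exact (hcomm s).symm⟩ with hφdef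
  obtain ⟨c, hc⟩ := CategoryTheory.endomorphism_simple_eq_smul_id (𝕜 := ℂ) φ
  have hz : z = c • (LinearMap.id : V →ₗ[ℂ] V) := (congrArg (fun f : V ⟶ V => f.hom.hom.hom) hc).symm
  have htr1 : LinearMap.trace ℂ V z = c * V.character 1 := by
    rw [hz, map_smul, smul_eq_mul, FDRep.char_one]
    congr 1
    exact LinearMap.trace_id ℂ V
  have htr2 : LinearMap.trace ℂ V z = (Fintype.card Γ : ℂ) := by
    rw [hzdef, map_sum, ← hsum]
    refine Finset.sum_congr rfl fun τ _ => ?_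
    rw [map_smul, smul_eq_mul]
    rw [char_inv_eq_conj V τ (isOfFinOrder_of_finite τ)]
    rw [mul_comm]
    rfl
  have hcval : c = (Fintype.card Γ : ℂ) / V.character 1 := by
    rw [eq_div_iff hchi1]
    exact htr1.symm.trans htr2
  intro u
  have step : ∀ τ : Γ, (starRingEnd ℂ) (V.character τ) * V.character (τ * u)
      = LinearMap.trace ℂ V ((starRingEnd ℂ) (V.character τ) • ((V.ρ τ : V →ₗ[ℂ] V) * V.ρ u)) := by
    intro τ
    rw [map_smul, smul_eq_mul, ← map_mul]
    rfl
  rw [Finset.sum_congr rfl fun τ _ => step τ, ← map_sum]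
  have : (∑ τ : Γ, (starRingEnd ℂ) (V.character τ) • ((V.ρ τ : V →ₗ[ℂ] V) * V.ρ u))
      = z * V.ρ u := by
    rw [hzdef, Finset.sum_mul]
    exact Finset.sum_congr rfl fun τ _ => (smul_mul_assoc _ _ _).symm
  rw [this, hz, smul_mul_assoc, map_smul, smul_eq_mul, hcval]
  congr 1

lemma vanish_of_char_sum_zero {Γ : Type} [Group Γ] [Fintype Γ] (V : FDRep ℂ Γ)
    (S : Finset Γ) (h1S : (1 : Γ) ∈ S)
    (hmul : ∀ a ∈ S, ∀ b ∈ S, a * b ∈ S) (hinv : ∀ a ∈ S, a⁻¹ ∈ S)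
    (hzero : ∑ h ∈ S, V.character h = 0) :
    ∀ σ : Γ, ∑ h ∈ S, V.character (h * σ) = 0 := by
  set T : V →ₗ[ℂ] V := ∑ h ∈ S, (V.ρ h : V →ₗ[ℂ] V) with hTdef
  have hmulT : ∀ a ∈ S, (V.ρ a : V →ₗ[ℂ] V) * T = T := by
    intro a ha
    rw [hTdef, Finset.mul_sum]
    have : ∀ h ∈ S, (V.ρ a : V →ₗ[ℂ] V) * V.ρ h = V.ρ (a * h) := fun h _ => (map_mul _ _ _).symm
    rw [Finset.sum_congr rfl this]
    refine Finset.sum_nbij' (fun h => a * h) (fun h => a⁻¹ * h) ?_ ?_ ?_ ?_ ?_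
    · intro b hb; exact hmul a ha b hb
    · intro b hb; exact hmul a⁻¹ (hinv a ha) b hb
    · intro b _; group
    · intro b _; group
    · intro b _; rfl
  have hTT : T ∘ₗ T = (S.card : ℂ) • T := by
    have h5 : T * T = ∑ a ∈ S, (V.ρ a : V →ₗ[ℂ] V) * T := by rw [hTdef, Finset.sum_mul]
    rw [← Module.End.mul_eq_comp, h5, Finset.sum_congr rfl hmulT, Finset.sum_const,
      Nat.cast_smul_eq_nsmul]
  have hScard : ((S.card : ℂ)) ≠ 0 := by
    have : S.Nonempty := ⟨1, h1S⟩
    exact_mod_cast Nat.cast_ne_zero.mpr (Finset.card_ne_zero_of_mem h1S)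
  have htrT : LinearMap.trace ℂ V T = 0 := by
    rw [hTdef, map_sum, ← hzero]
    rfl
  have hT0 : T = 0 := (projlike_trace T _ hScard hTT).2 htrT
  intro σ
  have : ∀ h ∈ S, V.character (h * σ)
      = LinearMap.trace ℂ V ((V.ρ h : V →ₗ[ℂ] V) * V.ρ σ) := by
    intro h _
    rw [← map_mul]
    rfl
  rw [Finset.sum_congr rfl this, ← map_sum, ← Finset.sum_mul]
  rw [← hTdef, hT0, zero_mul, map_zero]

/-- auxiliary: the monomial function of `L` -/
def mfun {n : ℕ} (L : Matrix (Fin n) (Fin n) ℂ) : (Fin n → Fin n) → ℂ :=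
  fun γ => ∏ j, L j (γ j)

/-- auxiliary: the generalized matrix function of `L[id|γ]` -/
def dfun {n : ℕ} (L : Matrix (Fin n) (Fin n) ℂ) (G : Subgroup (Equiv.Perm (Fin n)))
    [Fintype G] (V : FDRep ℂ G) : (Fin n → Fin n) → ℂ :=
  fun γ => ∑ σ : G, V.character σ * ∏ j, L j (γ ((σ : Equiv.Perm (Fin n)) j))

/-- auxiliary: cross terms -/
def qfun {n : ℕ} (L : Matrix (Fin n) (Fin n) ℂ) (G : Subgroup (Equiv.Perm (Fin n)))
    [Fintype G] : ↥G → ℂ :=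
  fun u => ∑ γ : Fin n → Fin n,
    (starRingEnd ℂ) (mfun L γ) * mfun L (γ ∘ ⇑(u : Equiv.Perm (Fin n)))

/-- Generalized Cauchy–Binet specialization: for a positive semidefinite `A = L L*`
with `L` lower triangular, a finite `G ≤ Sₙ` and an irreducible character `χ` of `G`,
`(1/χ(e)) d^G_χ(A) = (1/|G|) Σ_{γ ∈ Ω} |d^G_χ(L[id|γ])|²` where
`Ω = {γ : Σ_{g ∈ G_γ} χ(g) ≠ 0}` and `G_γ = {g ∈ G : γ ∘ g = γ}`; in particular
`(1/χ(e)) d^G_χ(A) ≥ 0`. -/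
theorem stmt_19 {n : ℕ} (A L : Matrix (Fin n) (Fin n) ℂ)
    (hL : ∀ i j : Fin n, i < j → L i j = 0)
    (hA : A = L * L.conjTranspose)
    (G : Subgroup (Equiv.Perm (Fin n))) [Fintype G]
    (V : FDRep ℂ G) [Simple V] :
    ((V.character 1)⁻¹ *
        ∑ g : G, V.character g * ∏ i, A i ((g : Equiv.Perm (Fin n)) i) =
      ((Fintype.card G : ℂ))⁻¹ *
        ∑ γ ∈ Finset.univ.filter (fun γ : Fin n → Fin n =>
            (∑ g ∈ Finset.univ.filter
                (fun g : G => γ ∘ (g : Equiv.Perm (Fin n)) = γ), V.character g) ≠ 0),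
          (Complex.normSq
            (∑ σ : G, V.character σ * ∏ j, L j (γ ((σ : Equiv.Perm (Fin n)) j))) : ℂ)) ∧
    0 ≤ (V.character 1)⁻¹ *
        ∑ g : G, V.character g * ∏ i, A i ((g : Equiv.Perm (Fin n)) i) := by
  have hcardG : ((Fintype.card ↥G : ℂ)) ≠ 0 := Nat.cast_ne_zero.mpr Fintype.card_ne_zero
  obtain ⟨hchi1, hconv⟩ := conv_char (Γ := ↥G) V
  let m : (Fin n → Fin n) → ℂ := mfun L
  let d : (Fin n → Fin n) → ℂ := dfun L G V
  let q : ↥G → ℂ := qfun L G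
  have hdm : ∀ γ : Fin n → Fin n,
      d γ = ∑ σ : ↥G, V.character σ * m (γ ∘ ⇑(σ : Equiv.Perm (Fin n))) := fun γ => rfl
  -- bijectivity of precomposition with a permutation
  have hbij : ∀ p : Equiv.Perm (Fin n),
      Function.Bijective (fun γ : Fin n → Fin n => γ ∘ ⇑p) := by
    intro p
    constructor
    · intro a b hab
      funext x
      have := congrFun hab (p⁻¹ x)
      simpa using this
    · intro γ
      exact ⟨γ ∘ ⇑p⁻¹, by funext x; simp⟩
  have hAentry : ∀ i j : Fin n, A i j = ∑ t : Fin n, L i t * (starRingEnd ℂ) (L j t) := by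
    intro i j
    rw [hA, Matrix.mul_apply]
    refine Finset.sum_congr rfl fun t _ => ?_
    rw [Matrix.conjTranspose_apply]
    rfl
  -- product formula
  have hprod : ∀ g : ↥G, (∏ i, A i ((g : Equiv.Perm (Fin n)) i))
      = ∑ γ : Fin n → Fin n,
          (starRingEnd ℂ) (m γ) * m (γ ∘ ⇑(g : Equiv.Perm (Fin n))) := by
    intro g
    set p : Equiv.Perm (Fin n) := (g : Equiv.Perm (Fin n)) with hp
    calc (∏ i, A i (p i)) = ∏ i, ∑ t : Fin n, L i t * (starRingEnd ℂ) (L (p i) t) :=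
          Finset.prod_congr rfl fun i _ => hAentry i (p i)
    _ = ∑ γ : Fin n → Fin n, ∏ i, (L i (γ i) * (starRingEnd ℂ) (L (p i) (γ i))) :=
          Fintype.prod_sum _
    _ = ∑ γ : Fin n → Fin n, m γ * (starRingEnd ℂ) (m (γ ∘ ⇑p⁻¹)) := by
          refine Finset.sum_congr rfl fun γ _ => ?_
          rw [Finset.prod_mul_distrib]
          congr 1
          rw [← map_prod]
          congr 1
          show (∏ i, L (p i) (γ i)) = ∏ j, L j (γ (p⁻¹ j))
          rw [← Equiv.prod_comp p (fun i => L i (γ (p⁻¹ i)))]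
          refine Finset.prod_congr rfl fun i _ => ?_
          rw [← Equiv.Perm.mul_apply, inv_mul_cancel, Equiv.Perm.one_apply]
    _ = ∑ γ : Fin n → Fin n, (starRingEnd ℂ) (m γ) * m (γ ∘ ⇑p) := by
          refine Fintype.sum_bijective (fun γ => γ ∘ ⇑p⁻¹) (hbij p⁻¹) _ _ ?_
          intro γ
          have hcomp : (γ ∘ ⇑p⁻¹) ∘ ⇑p = γ := by funext x; simp
          show m γ * (starRingEnd ℂ) (m (γ ∘ ⇑p⁻¹))
              = (starRingEnd ℂ) (m (γ ∘ ⇑p⁻¹)) * m ((γ ∘ ⇑p⁻¹) ∘ ⇑p)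
          rw [hcomp, mul_comm]
  have hLHS : (∑ g : ↥G, V.character g * ∏ i, A i ((g : Equiv.Perm (Fin n)) i))
      = ∑ u : ↥G, V.character u * q u :=
    Finset.sum_congr rfl fun g _ => by rw [hprod g]; rfl
  -- vanishing off Ω
  have hvan : ∀ γ : Fin n → Fin n,
      (∑ g ∈ Finset.univ.filter
          (fun g : ↥G => γ ∘ ⇑(g : Equiv.Perm (Fin n)) = γ), V.character g) = 0
      → d γ = 0 := by
    intro γ h0
    set S : Finset ↥G :=
      Finset.univ.filter (fun g : ↥G => γ ∘ ⇑(g : Equiv.Perm (Fin n)) = γ) with hS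
    have hmem : ∀ g : ↥G, g ∈ S ↔ γ ∘ ⇑(g : Equiv.Perm (Fin n)) = γ := by
      intro g; simp [hS]
    have h1S : (1 : ↥G) ∈ S := by
      rw [hmem]
      simp
    have hmulS : ∀ a ∈ S, ∀ b ∈ S, a * b ∈ S := by
      intro a ha b hb
      rw [hmem] at ha hb ⊢
      have : ((↑(a * b) : Equiv.Perm (Fin n)) : Fin n → Fin n)
          = ⇑(a : Equiv.Perm (Fin n)) ∘ ⇑(b : Equiv.Perm (Fin n)) := by
        simp [Equiv.Perm.coe_mul]
      rw [this, ← Function.comp_assoc, ha, hb]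
    have hinvS : ∀ a ∈ S, a⁻¹ ∈ S := by
      intro a ha
      rw [hmem] at ha ⊢
      funext x
      have := congrFun ha ((↑(a⁻¹ : ↥G) : Equiv.Perm (Fin n)) x)
      simpa using this.symm
    have hv := vanish_of_char_sum_zero V S h1S hmulS hinvS h0
    have hcardS : ((S.card : ℂ)) ≠ 0 :=
      Nat.cast_ne_zero.mpr (Finset.card_ne_zero_of_mem h1S)
    have key : ∀ h ∈ S, d γ
        = ∑ σ : ↥G, V.character (h * σ) * m (γ ∘ ⇑(σ : Equiv.Perm (Fin n))) := by
      intro h hh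
      rw [hmem] at hh
      rw [hdm]
      refine (Fintype.sum_equiv (Equiv.mulLeft h) _ _ ?_).symm
      intro σ
      simp only [Equiv.coe_mulLeft]
      congr 2
      funext x
      have := congrFun hh ((σ : Equiv.Perm (Fin n)) x)
      simpa using this.symm
    have hzero : (S.card : ℂ) * d γ = 0 := by
      have e1 : (S.card : ℂ) * d γ = ∑ _h ∈ S, d γ := by
        rw [Finset.sum_const, nsmul_eq_mul]
      rw [e1, Finset.sum_congr rfl key, Finset.sum_comm]
      have e2 : ∀ σ : ↥G,
          (∑ h ∈ S, V.character (h * σ) * m (γ ∘ ⇑(σ : Equiv.Perm (Fin n)))) = 0 := by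
        intro σ
        rw [← Finset.sum_mul, hv σ, zero_mul]
      rw [Finset.sum_congr rfl fun σ _ => e2 σ, Finset.sum_const, smul_zero]
    exact (mul_eq_zero.mp hzero).resolve_left hcardS
  -- the full sum identity
  have hfull : (∑ γ : Fin n → Fin n, d γ * (starRingEnd ℂ) (d γ))
      = ((Fintype.card ↥G : ℂ) / V.character 1) * ∑ u : ↥G, V.character u * q u := by
    have hconjd : ∀ γ : Fin n → Fin n, (starRingEnd ℂ) (d γ)
        = ∑ τ : ↥G, (starRingEnd ℂ) (V.character τ)
            * (starRingEnd ℂ) (m (γ ∘ ⇑(τ : Equiv.Perm (Fin n)))) := by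
      intro γ
      rw [hdm, map_sum]
      exact Finset.sum_congr rfl fun τ _ => by rw [map_mul]
    have step1 : (∑ γ : Fin n → Fin n, d γ * (starRingEnd ℂ) (d γ))
        = ∑ τ : ↥G, (starRingEnd ℂ) (V.character τ)
            * ∑ γ : Fin n → Fin n,
                (starRingEnd ℂ) (m (γ ∘ ⇑(τ : Equiv.Perm (Fin n)))) * d γ := by
      calc (∑ γ : Fin n → Fin n, d γ * (starRingEnd ℂ) (d γ))
          = ∑ γ : Fin n → Fin n, ∑ τ : ↥G, (starRingEnd ℂ) (V.character τ)
              * ((starRingEnd ℂ) (m (γ ∘ ⇑(τ : Equiv.Perm (Fin n)))) * d γ) := by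
            refine Finset.sum_congr rfl fun γ _ => ?_
            rw [hconjd γ, Finset.mul_sum]
            exact Finset.sum_congr rfl fun τ _ => by ring
        _ = ∑ τ : ↥G, ∑ γ : Fin n → Fin n, (starRingEnd ℂ) (V.character τ)
              * ((starRingEnd ℂ) (m (γ ∘ ⇑(τ : Equiv.Perm (Fin n)))) * d γ) :=
            Finset.sum_comm
        _ = ∑ τ : ↥G, (starRingEnd ℂ) (V.character τ)
              * ∑ γ : Fin n → Fin n,
                  (starRingEnd ℂ) (m (γ ∘ ⇑(τ : Equiv.Perm (Fin n)))) * d γ :=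
            Finset.sum_congr rfl fun τ _ => by rw [Finset.mul_sum]
    have step2 : ∀ τ : ↥G,
        (∑ γ : Fin n → Fin n, (starRingEnd ℂ) (m (γ ∘ ⇑(τ : Equiv.Perm (Fin n)))) * d γ)
        = ∑ γ : Fin n → Fin n, (starRingEnd ℂ) (m γ)
            * d (γ ∘ ⇑((τ : Equiv.Perm (Fin n)))⁻¹) := by
      intro τ
      refine (Fintype.sum_bijective (fun γ => γ ∘ ⇑((τ : Equiv.Perm (Fin n)))⁻¹)
        (hbij _) _ _ ?_).symm
      intro γ
      have hcomp : (γ ∘ ⇑((τ : Equiv.Perm (Fin n)))⁻¹) ∘ ⇑(τ : Equiv.Perm (Fin n)) = γ := by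
        funext x; simp
      show (starRingEnd ℂ) (m γ) * d (γ ∘ ⇑((τ : Equiv.Perm (Fin n)))⁻¹)
          = (starRingEnd ℂ)
              (m ((γ ∘ ⇑((τ : Equiv.Perm (Fin n)))⁻¹) ∘ ⇑(τ : Equiv.Perm (Fin n))))
            * d (γ ∘ ⇑((τ : Equiv.Perm (Fin n)))⁻¹)
      rw [hcomp]
    have step3 : ∀ (τ : ↥G) (γ : Fin n → Fin n),
        d (γ ∘ ⇑((τ : Equiv.Perm (Fin n)))⁻¹)
        = ∑ u : ↥G, V.character (τ * u) * m (γ ∘ ⇑(u : Equiv.Perm (Fin n))) := by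
      intro τ γ
      rw [hdm]
      refine (Fintype.sum_equiv (Equiv.mulLeft τ) _ _ ?_).symm
      intro u
      simp only [Equiv.coe_mulLeft]
      congr 2
      funext x
      simp [Equiv.Perm.coe_mul]
    have step4 : ∀ τ : ↥G,
        (∑ γ : Fin n → Fin n, (starRingEnd ℂ) (m γ)
            * d (γ ∘ ⇑((τ : Equiv.Perm (Fin n)))⁻¹))
        = ∑ u : ↥G, V.character (τ * u) * q u := by
      intro τ
      calc (∑ γ : Fin n → Fin n, (starRingEnd ℂ) (m γ)
            * d (γ ∘ ⇑((τ : Equiv.Perm (Fin n)))⁻¹))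
          = ∑ γ : Fin n → Fin n, ∑ u : ↥G, V.character (τ * u)
              * ((starRingEnd ℂ) (m γ) * m (γ ∘ ⇑(u : Equiv.Perm (Fin n)))) := by
            refine Finset.sum_congr rfl fun γ _ => ?_
            rw [step3 τ γ, Finset.mul_sum]
            exact Finset.sum_congr rfl fun u _ => by ring
        _ = ∑ u : ↥G, ∑ γ : Fin n → Fin n, V.character (τ * u)
              * ((starRingEnd ℂ) (m γ) * m (γ ∘ ⇑(u : Equiv.Perm (Fin n)))) :=
            Finset.sum_comm
        _ = ∑ u : ↥G, V.character (τ * u) * q u := by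
            refine Finset.sum_congr rfl fun u _ => ?_
            rw [show (q u : ℂ) = ∑ γ : Fin n → Fin n,
              (starRingEnd ℂ) (m γ) * m (γ ∘ ⇑(u : Equiv.Perm (Fin n))) from rfl,
              Finset.mul_sum]
    calc (∑ γ : Fin n → Fin n, d γ * (starRingEnd ℂ) (d γ))
        = ∑ τ : ↥G, (starRingEnd ℂ) (V.character τ)
            * ∑ u : ↥G, V.character (τ * u) * q u := by
          rw [step1]
          exact Finset.sum_congr rfl fun τ _ => by rw [step2 τ, step4 τ]
      _ = ∑ τ : ↥G, ∑ u : ↥G,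
            ((starRingEnd ℂ) (V.character τ) * V.character (τ * u)) * q u := by
          refine Finset.sum_congr rfl fun τ _ => ?_
          rw [Finset.mul_sum]
          exact Finset.sum_congr rfl fun u _ => by ring
      _ = ∑ u : ↥G, ∑ τ : ↥G,
            ((starRingEnd ℂ) (V.character τ) * V.character (τ * u)) * q u :=
          Finset.sum_comm
      _ = ∑ u : ↥G, (((Fintype.card ↥G : ℂ) / V.character 1) * V.character u) * q u := by
          refine Finset.sum_congr rfl fun u _ => ?_
          rw [← Finset.sum_mul, hconv u]
      _ = ((Fintype.card ↥G : ℂ) / V.character 1) * ∑ u : ↥G, V.character u * q u := by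
          rw [Finset.mul_sum]
          exact Finset.sum_congr rfl fun u _ => by ring
  -- conclude
  have hΩ : (∑ γ ∈ Finset.univ.filter (fun γ : Fin n → Fin n =>
        (∑ g ∈ Finset.univ.filter
            (fun g : ↥G => γ ∘ ⇑(g : Equiv.Perm (Fin n)) = γ), V.character g) ≠ 0),
        ((Complex.normSq (d γ) : ℝ) : ℂ))
      = ∑ γ : Fin n → Fin n, d γ * (starRingEnd ℂ) (d γ) := by
    rw [Finset.sum_filter_of_ne]
    · exact Finset.sum_congr rfl fun γ _ => (Complex.mul_conj (d γ)).symm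
    · intro γ _ hne
      by_contra hp
      apply hne
      rw [hvan γ hp]
      simp
  have goal1 : ((V.character 1)⁻¹ *
        ∑ g : ↥G, V.character g * ∏ i, A i ((g : Equiv.Perm (Fin n)) i) =
      ((Fintype.card ↥G : ℂ))⁻¹ *
        ∑ γ ∈ Finset.univ.filter (fun γ : Fin n → Fin n =>
            (∑ g ∈ Finset.univ.filter
                (fun g : ↥G => γ ∘ ⇑(g : Equiv.Perm (Fin n)) = γ), V.character g) ≠ 0),
          ((Complex.normSq (d γ) : ℝ) : ℂ)) := by
    rw [hLHS, hΩ, hfull]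
    field_simp
  have goal2 : (0 : ℂ) ≤ ((Fintype.card ↥G : ℂ))⁻¹ *
        ∑ γ ∈ Finset.univ.filter (fun γ : Fin n → Fin n =>
            (∑ g ∈ Finset.univ.filter
                (fun g : ↥G => γ ∘ ⇑(g : Equiv.Perm (Fin n)) = γ), V.character g) ≠ 0),
          ((Complex.normSq (d γ) : ℝ) : ℂ) := by
    have hcast : ((Fintype.card ↥G : ℂ))⁻¹ *
        (∑ γ ∈ Finset.univ.filter (fun γ : Fin n → Fin n =>
            (∑ g ∈ Finset.univ.filter
                (fun g : ↥G => γ ∘ ⇑(g : Equiv.Perm (Fin n)) = γ), V.character g) ≠ 0),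
          ((Complex.normSq (d γ) : ℝ) : ℂ))
        = (((Fintype.card ↥G : ℝ))⁻¹ *
            ∑ γ ∈ Finset.univ.filter (fun γ : Fin n → Fin n =>
            (∑ g ∈ Finset.univ.filter
                (fun g : ↥G => γ ∘ ⇑(g : Equiv.Perm (Fin n)) = γ), V.character g) ≠ 0),
              Complex.normSq (d γ) : ℝ) := by
      push_cast
      ring
    rw [hcast]
    rw [Complex.zero_le_real]
    have h1 : (0:ℝ) ≤ ((Fintype.card ↥G : ℝ))⁻¹ :=
      inv_nonneg.mpr (Nat.cast_nonneg _)
    exact mul_nonneg h1 (Finset.sum_nonneg fun γ _ => Complex.normSq_nonneg _)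
  exact ⟨goal1, goal1 ▸ goal2⟩

end
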